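/- Let G = (V,E) be a finite simple graph on n = |V| vertices without isolated vertices and with unit-length edges, and let s,t ∈ V be distinct. Let G' be the split graph with vertex set V ⊎ W, where W = { w^e_j : e ∈ E, j ∈ {1,…,n²} }, in which any two distinct vertices of V are adjacent, each w^e_j ∈ W is adjacent exactly to the two endpoints of e, and W is an independent set. Then for all k,ℓ ∈ ℕ: there exists S' ⊆ E(G') with |S'| ≤ n(n−1)/2 + k·n² and dist_{G'−S'}(s,t) ≥ 2ℓ if and only if there exists S ⊆ E with |S| ≤ k and dist_{G−S}(s,t) ≥ ℓ. -/

import Mathlib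

/-- The relation generating the split graph of the reduction: the original
vertices (`Sum.inl`) are pairwise adjacent (a clique), each subdivision vertex
`w^e_j = Sum.inr (e, j)` is adjacent exactly to the two endpoints of `e`, and
the subdivision vertices form an independent set. -/
def splitRel {V : Type*} (G : SimpleGraph V) (n : ℕ) :
    (V ⊕ (↥G.edgeSet × Fin n)) → (V ⊕ (↥G.edgeSet × Fin n)) → Prop
  | Sum.inl _, Sum.inl _ => True
  | Sum.inl a, Sum.inr ej => a ∈ (ej.1 : Sym2 V)
  | _, _ => False

/-- The split graph `G'` of the reduction, on vertex set `V ⊎ (E × Fin n)`. -/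
def splitG {V : Type*} (G : SimpleGraph V) (n : ℕ) :
    SimpleGraph (V ⊕ (↥G.edgeSet × Fin n)) :=
  SimpleGraph.fromRel (splitRel G n)

lemma splitG_adj_inl_inl {V : Type*} {G : SimpleGraph V} {n : ℕ} {a b : V} :
    (splitG G n).Adj (Sum.inl a) (Sum.inl b) ↔ a ≠ b := by
  rw [splitG, SimpleGraph.fromRel_adj]
  constructor
  · rintro ⟨h, -⟩ rfl; exact h rfl
  · intro h; exact ⟨fun hc => h (Sum.inl.inj hc), Or.inl trivial⟩

lemma splitG_adj_inl_inr {V : Type*} {G : SimpleGraph V} {n : ℕ} {a : V}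
    {x : ↥G.edgeSet × Fin n} :
    (splitG G n).Adj (Sum.inl a) (Sum.inr x) ↔ a ∈ (x.1 : Sym2 V) := by
  rw [splitG, SimpleGraph.fromRel_adj]
  constructor
  · rintro ⟨-, h | h⟩
    · exact h
    · exact h.elim
  · intro h; exact ⟨by simp, Or.inl h⟩

lemma splitG_not_adj_inr {V : Type*} {G : SimpleGraph V} {n : ℕ}
    {x y : ↥G.edgeSet × Fin n} :
    ¬ (splitG G n).Adj (Sum.inr x) (Sum.inr y) := by
  rw [splitG, SimpleGraph.fromRel_adj]
  rintro ⟨-, h | h⟩ <;> exact h.elim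

lemma le_edist_iff' {V : Type*} {G : SimpleGraph V} {u v : V} {c : ℕ∞} :
    c ≤ G.edist u v ↔ ∀ p : G.Walk u v, c ≤ p.length := by
  rw [SimpleGraph.edist_eq_sInf, le_sInf_iff]
  constructor
  · intro h p; exact h _ ⟨p, rfl⟩
  · rintro h b ⟨p, rfl⟩; exact h p

lemma project {V : Type*} {G : SimpleGraph V} {n : ℕ}
    {S' : Set (Sym2 (V ⊕ (↥G.edgeSet × Fin n)))} {S : Set (Sym2 V)}
    (H1 : ∀ a b : V, ¬ ((splitG G n).deleteEdges S').Adj (Sum.inl a) (Sum.inl b))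
    (H2 : ∀ (a c : V) (x : ↥G.edgeSet × Fin n),
      ((splitG G n).deleteEdges S').Adj (Sum.inl a) (Sum.inr x) →
      ((splitG G n).deleteEdges S').Adj (Sum.inl c) (Sum.inr x) →
      a ≠ c → (G.deleteEdges S).Adj a c) :
    ∀ (m : ℕ) (x y : V ⊕ (↥G.edgeSet × Fin n))
      (p : ((splitG G n).deleteEdges S').Walk x y), p.length ≤ m →
      ∀ (a b : V), x = Sum.inl a → y = Sum.inl b →
      ∃ q : (G.deleteEdges S).Walk a b, 2 * q.length ≤ p.length := by
  intro m
  induction m with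
  | zero =>
    intro x y p hp a b hx hy
    cases p with
    | nil =>
      obtain rfl : a = b := Sum.inl.inj (hx.symm.trans hy)
      exact ⟨SimpleGraph.Walk.nil, by simp⟩
    | cons h p' => simp [SimpleGraph.Walk.length_cons] at hp
  | succ m ih =>
    intro x y p hp a b hx hy
    cases p with
    | nil =>
      obtain rfl : a = b := Sum.inl.inj (hx.symm.trans hy)
      exact ⟨SimpleGraph.Walk.nil, by simp⟩
    | cons h p' =>
      rename_i z
      subst hx
      cases z with
      | inl c => exact absurd h (H1 a c)
      | inr w =>
        cases p' with
        | nil => simp at hy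
        | cons h' p'' =>
          rename_i z2
          cases z2 with
          | inr w2 =>
            rw [SimpleGraph.deleteEdges_adj] at h'
            exact absurd h'.1 splitG_not_adj_inr
          | inl c =>
            have hp'' : p''.length ≤ m := by
              simp only [SimpleGraph.Walk.length_cons] at hp; omega
            obtain ⟨q', hq'⟩ := ih _ _ p'' hp'' c b rfl hy
            by_cases hac : a = c
            · subst hac
              exact ⟨q', by simp only [SimpleGraph.Walk.length_cons]; omega⟩
            · exact ⟨SimpleGraph.Walk.cons (H2 a c w h h'.symm hac) q',
                by simp only [SimpleGraph.Walk.length_cons]; omega⟩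

lemma liftW {V : Type*} {G : SimpleGraph V} {n : ℕ}
    {S' : Set (Sym2 (V ⊕ (↥G.edgeSet × Fin n)))} {S : Set (Sym2 V)}
    (L1 : ∀ a c : V, (G.deleteEdges S).Adj a c → ∃ x : ↥G.edgeSet × Fin n,
        ((splitG G n).deleteEdges S').Adj (Sum.inl a) (Sum.inr x) ∧
        ((splitG G n).deleteEdges S').Adj (Sum.inr x) (Sum.inl c)) :
    ∀ {a b : V} (q : (G.deleteEdges S).Walk a b),
      ∃ p : ((splitG G n).deleteEdges S').Walk (Sum.inl a) (Sum.inl b),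
        p.length = 2 * q.length := by
  intro a b q
  induction q with
  | nil => exact ⟨SimpleGraph.Walk.nil, by simp⟩
  | cons h q' ih =>
    obtain ⟨p', hp'⟩ := ih
    obtain ⟨x, h1, h2⟩ := L1 _ _ h
    exact ⟨SimpleGraph.Walk.cons h1 (SimpleGraph.Walk.cons h2 p'),
      by simp only [SimpleGraph.Walk.length_cons, hp']; omega⟩

lemma edge_with_inr {V : Type*} {G : SimpleGraph V} {n : ℕ}
    {z : Sym2 (V ⊕ (↥G.edgeSet × Fin n))} (hz : z ∈ (splitG G n).edgeSet)
    {x : ↥G.edgeSet × Fin n} (hx : Sum.inr x ∈ z) :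
    ∃ a : V, a ∈ (x.1 : Sym2 V) ∧ z = s(Sum.inl a, Sum.inr x) := by
  induction z using Sym2.ind with
  | _ u v =>
    rw [Sym2.mem_iff] at hx
    rw [SimpleGraph.mem_edgeSet] at hz
    rcases hx with h | h
    · subst h
      cases v with
      | inl a => exact ⟨a, splitG_adj_inl_inr.mp hz.symm, Sym2.eq_swap⟩
      | inr y => exact absurd hz splitG_not_adj_inr
    · subst h
      cases u with
      | inl a => exact ⟨a, splitG_adj_inl_inr.mp hz, rfl⟩
      | inr y => exact absurd hz splitG_not_adj_inr


/-- **Correctness of the reduction to split graphs (unit lengths).**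
Let `G` be a finite simple graph on `n` vertices without isolated vertices,
`s ≠ t` vertices, and let `G'` be the split graph with vertex set `V ⊎ W`,
`W = {w^e_j : e ∈ E, j ∈ Fin n²}`, where `V` is turned into a clique, each
`w^e_j` is adjacent exactly to the endpoints of `e`, and `W` is independent.
Then for all `k, ℓ ∈ ℕ`: there is `S' ⊆ E(G')` with
`|S'| ≤ n(n−1)/2 + k·n²` and `dist_{G'−S'}(s,t) ≥ 2ℓ` iff there is `S ⊆ E(G)`
with `|S| ≤ k` and `dist_{G−S}(s,t) ≥ ℓ`. -/
theorem stmt8 {V : Type*} [Fintype V] (G : SimpleGraph V)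
    (hiso : ∀ v : V, ∃ w : V, G.Adj v w) (s t : V) (hst : s ≠ t) (k ℓ : ℕ) :
    (∃ S' : Finset (Sym2 (V ⊕ (↥G.edgeSet × Fin ((Fintype.card V) ^ 2)))),
        ↑S' ⊆ (splitG G ((Fintype.card V) ^ 2)).edgeSet ∧
        S'.card ≤ Fintype.card V * (Fintype.card V - 1) / 2
          + k * (Fintype.card V) ^ 2 ∧
        ((2 * ℓ : ℕ) : ℕ∞) ≤
          ((splitG G ((Fintype.card V) ^ 2)).deleteEdges ↑S').edist
            (Sum.inl s) (Sum.inl t)) ↔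
    (∃ S : Finset (Sym2 V), ↑S ⊆ G.edgeSet ∧ S.card ≤ k ∧
        (ℓ : ℕ∞) ≤ (G.deleteEdges ↑S).edist s t) := by
  classical
  set n := Fintype.card V with hn
  have hn1 : 1 ≤ n := Fintype.card_pos_iff.mpr ⟨s⟩
  have hNpos : n * (n - 1) / 2 < n ^ 2 := by
    calc n * (n - 1) / 2 ≤ n * (n - 1) := Nat.div_le_self _ _
    _ < n * n := by nlinarith [Nat.sub_lt hn1 Nat.one_pos]
    _ = n ^ 2 := (sq n).symm
  constructor
  · rintro ⟨S', hsub, hcard, hdist⟩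
    let pred : ↥G.edgeSet → Prop := fun e => ∀ j : Fin (n ^ 2),
      ∃ z ∈ S', (Sum.inr (e, j) : V ⊕ (↥G.edgeSet × Fin (n ^ 2))) ∈ z
    let T : Finset ↥G.edgeSet := Finset.univ.filter pred
    refine ⟨T.image Subtype.val, ?_, ?_, ?_⟩
    · intro e he
      simp only [Finset.coe_image, Set.mem_image, Finset.mem_coe] at he
      obtain ⟨e', -, rfl⟩ := he; exact e'.2
    · -- cardinality bound
      let f : ↥G.edgeSet × Fin (n ^ 2) → Sym2 (V ⊕ (↥G.edgeSet × Fin (n ^ 2))) :=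
        fun p => if h : ∃ z ∈ S', (Sum.inr p : V ⊕ (↥G.edgeSet × Fin (n ^ 2))) ∈ z
          then h.choose else s(Sum.inl s, Sum.inl s)
      have hf : ∀ p ∈ T ×ˢ (Finset.univ : Finset (Fin (n ^ 2))),
          f p ∈ S' ∧ (Sum.inr p : V ⊕ (↥G.edgeSet × Fin (n ^ 2))) ∈ f p := by
        rintro ⟨e, j⟩ hp
        have he : e ∈ T := (Finset.mem_product.mp hp).1
        have hex : ∃ z ∈ S', (Sum.inr (e, j) : V ⊕ (↥G.edgeSet × Fin (n ^ 2))) ∈ z :=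
          (Finset.mem_filter.mp he).2 j
        simp only [f, dif_pos hex]
        exact ⟨hex.choose_spec.1, hex.choose_spec.2⟩
      have hinj : Set.InjOn f ↑(T ×ˢ (Finset.univ : Finset (Fin (n ^ 2)))) := by
        intro p hp p' hp' hfe
        obtain ⟨h1, h2⟩ := hf p (Finset.mem_coe.mp hp)
        obtain ⟨h1', h2'⟩ := hf p' (Finset.mem_coe.mp hp')
        rw [hfe] at h2
        obtain ⟨a, -, hz⟩ := edge_with_inr (hsub h1') h2'
        rw [hz, Sym2.mem_iff] at h2
        rcases h2 with h | h
        · exact absurd h (by simp)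
        · exact Sum.inr.inj h
      have hle : T.card * n ^ 2 ≤ S'.card := by
        have := Finset.card_le_card_of_injOn f (fun p hp => (hf p hp).1) hinj
        simpa [Finset.card_product] using this
      rw [Finset.card_image_of_injective _ Subtype.val_injective]
      by_contra hcon
      push_neg at hcon
      have h1 : (k + 1) * n ^ 2 ≤ T.card * n ^ 2 := Nat.mul_le_mul_right _ hcon
      have h2 : n * (n - 1) / 2 + k * n ^ 2 < (k + 1) * n ^ 2 := by
        rw [Nat.succ_mul]
        omega
      omega
    · rw [le_edist_iff']
      intro q0
      have L1 : ∀ a c : V, (G.deleteEdges (↑(T.image Subtype.val) : Set (Sym2 V))).Adj a c →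
          ∃ x : ↥G.edgeSet × Fin (n ^ 2),
          ((splitG G (n ^ 2)).deleteEdges (↑S' : Set _)).Adj (Sum.inl a) (Sum.inr x) ∧
          ((splitG G (n ^ 2)).deleteEdges (↑S' : Set _)).Adj (Sum.inr x) (Sum.inl c) := by
        intro a c hac
        rw [SimpleGraph.deleteEdges_adj] at hac
        obtain ⟨hadj, hnot⟩ := hac
        set e₀ : ↥G.edgeSet := ⟨s(a, c), hadj⟩ with he₀
        have hT : e₀ ∉ T := by
          intro hT
          exact hnot (by
            simp only [Finset.coe_image, Set.mem_image, Finset.mem_coe]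
            exact ⟨e₀, hT, rfl⟩)
        have hnp : ∃ j : Fin (n ^ 2), ∀ z ∈ S',
            (Sum.inr (e₀, j) : V ⊕ (↥G.edgeSet × Fin (n ^ 2))) ∉ z := by
          by_contra hcon
          push_neg at hcon
          exact hT (Finset.mem_filter.mpr ⟨Finset.mem_univ _, hcon⟩)
        obtain ⟨j, hj⟩ := hnp
        refine ⟨(e₀, j), ?_, ?_⟩
        · rw [SimpleGraph.deleteEdges_adj]
          exact ⟨splitG_adj_inl_inr.mpr (Sym2.mem_mk_left a c),
            fun hmem => hj _ (Finset.mem_coe.mp hmem) (Sym2.mem_mk_right _ _)⟩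
        · rw [SimpleGraph.deleteEdges_adj]
          refine ⟨(splitG_adj_inl_inr.mpr (Sym2.mem_mk_right a c)).symm, ?_⟩
          intro hmem
          rw [Sym2.eq_swap] at hmem
          exact hj _ (Finset.mem_coe.mp hmem) (Sym2.mem_mk_right _ _)
      obtain ⟨p, hp⟩ := liftW L1 q0
      have h2 : ((2 * ℓ : ℕ) : ℕ∞) ≤ (p.length : ℕ∞) :=
        le_trans hdist (SimpleGraph.edist_le p)
      rw [hp] at h2
      have h3 : 2 * ℓ ≤ 2 * q0.length := by exact_mod_cast h2
      exact_mod_cast Nat.le_of_mul_le_mul_left (by omega : 2 * ℓ ≤ 2 * q0.length) Nat.zero_lt_two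
  · rintro ⟨S, hS, hk, hd⟩
    let C : Finset (Sym2 (V ⊕ (↥G.edgeSet × Fin (n ^ 2)))) :=
      ((Finset.univ : Finset V).offDiag.image Sym2.mk.uncurry).image (Sym2.map Sum.inl)
    let D : Finset (Sym2 (V ⊕ (↥G.edgeSet × Fin (n ^ 2)))) :=
      (S.attach ×ˢ (Finset.univ : Finset (Fin (n ^ 2)))).image
        (fun p => s(Sum.inl ((p.1 : Sym2 V).out.1),
          (Sum.inr (⟨(p.1 : Sym2 V), hS p.1.2⟩, p.2) : V ⊕ (↥G.edgeSet × Fin (n ^ 2)))))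
    refine ⟨C ∪ D, ?_, ?_, ?_⟩
    · intro z hz
      rw [Finset.coe_union, Set.mem_union] at hz
      rcases hz with hz | hz
      · rw [Finset.mem_coe, Finset.mem_image] at hz
        obtain ⟨z₀, hz₀, rfl⟩ := hz
        obtain ⟨⟨a, b⟩, hab, rfl⟩ := Finset.mem_image.mp hz₀
        rw [Finset.mem_offDiag] at hab
        show Sym2.map Sum.inl s(a, b) ∈ _
        rw [Sym2.map_pair_eq, SimpleGraph.mem_edgeSet]
        exact splitG_adj_inl_inl.mpr hab.2.2
      · rw [Finset.mem_coe, Finset.mem_image] at hz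
        obtain ⟨p, -, rfl⟩ := hz
        rw [SimpleGraph.mem_edgeSet]
        exact splitG_adj_inl_inr.mpr (Sym2.out_fst_mem _)
    · have hC : C.card = n * (n - 1) / 2 := by
        rw [Finset.card_image_of_injective _ (Sym2.map.injective Sum.inl_injective),
          Sym2.card_image_offDiag, Finset.card_univ, Nat.choose_two_right]
      have hD : D.card ≤ k * n ^ 2 := by
        calc D.card ≤ (S.attach ×ˢ (Finset.univ : Finset (Fin (n ^ 2)))).card :=
              Finset.card_image_le
        _ = S.card * n ^ 2 := by
              rw [Finset.card_product, Finset.card_attach, Finset.card_univ, Fintype.card_fin]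
        _ ≤ k * n ^ 2 := Nat.mul_le_mul_right _ hk
      calc (C ∪ D).card ≤ C.card + D.card := Finset.card_union_le _ _
      _ ≤ n * (n - 1) / 2 + k * n ^ 2 := by rw [hC]; omega
    · rw [le_edist_iff']
      intro p
      have H1 : ∀ a b : V,
          ¬ ((splitG G (n ^ 2)).deleteEdges (↑(C ∪ D) : Set _)).Adj (Sum.inl a) (Sum.inl b) := by
        intro a b h
        rw [SimpleGraph.deleteEdges_adj] at h
        obtain ⟨hadj, hmem⟩ := h
        have hab : a ≠ b := splitG_adj_inl_inl.mp hadj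
        apply hmem
        refine Finset.mem_coe.mpr (Finset.mem_union_left _ ?_)
        refine Finset.mem_image.mpr ⟨s(a, b), ?_, by rw [Sym2.map_pair_eq]⟩
        exact Finset.mem_image.mpr ⟨(a, b),
          Finset.mem_offDiag.mpr ⟨Finset.mem_univ _, Finset.mem_univ _, hab⟩, rfl⟩
      have H2 : ∀ (a c : V) (x : ↥G.edgeSet × Fin (n ^ 2)),
          ((splitG G (n ^ 2)).deleteEdges (↑(C ∪ D) : Set _)).Adj (Sum.inl a) (Sum.inr x) →
          ((splitG G (n ^ 2)).deleteEdges (↑(C ∪ D) : Set _)).Adj (Sum.inl c) (Sum.inr x) →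
          a ≠ c → (G.deleteEdges (↑S : Set (Sym2 V))).Adj a c := by
        rintro a c ⟨e, j⟩ h1 h2 hac
        rw [SimpleGraph.deleteEdges_adj] at h1 h2
        have ha : a ∈ (e : Sym2 V) := splitG_adj_inl_inr.mp h1.1
        have hc : c ∈ (e : Sym2 V) := splitG_adj_inl_inr.mp h2.1
        have he : (e : Sym2 V) = s(a, c) := (Sym2.mem_and_mem_iff hac).mp ⟨ha, hc⟩
        rw [SimpleGraph.deleteEdges_adj]
        refine ⟨by have := e.2; rwa [he, SimpleGraph.mem_edgeSet] at this, ?_⟩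
        intro hmemS
        have hmemS' : (e : Sym2 V) ∈ S := by rw [he]; exact Finset.mem_coe.mp hmemS
        have hD : s(Sum.inl ((e : Sym2 V).out.1),
            (Sum.inr (e, j) : V ⊕ (↥G.edgeSet × Fin (n ^ 2)))) ∈ D := by
          refine Finset.mem_image.mpr ⟨(⟨(e : Sym2 V), hmemS'⟩, j),
            Finset.mem_product.mpr ⟨Finset.mem_attach _ _, Finset.mem_univ _⟩, ?_⟩
          congr
        have houtmem : (e : Sym2 V).out.1 ∈ ((e : Sym2 V)) := Sym2.out_fst_mem _
        rw [he, Sym2.mem_iff] at houtmem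
        rw [he] at hD
        rcases houtmem with h | h
        · rw [h] at hD
          exact h1.2 (Finset.mem_coe.mpr (Finset.mem_union_right _ hD))
        · rw [h] at hD
          exact h2.2 (Finset.mem_coe.mpr (Finset.mem_union_right _ hD))
      obtain ⟨q, hq⟩ := project H1 H2 p.length _ _ p le_rfl s t rfl rfl
      have h1 : (ℓ : ℕ∞) ≤ (q.length : ℕ∞) := le_trans hd (SimpleGraph.edist_le q)
      have h2 : ℓ ≤ q.length := by exact_mod_cast h1
      exact_mod_cast (by exact_mod_cast Nat.cast_le.mpr (by omega : 2 * ℓ ≤ p.length) :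
        ((2 * ℓ : ℕ) : ℕ∞) ≤ (p.length : ℕ∞))
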